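/- T₂(1,m) ≥ T₂(0,m) holds for every m ≥ 0 if and only if μ₁ ≥ μ₂; moreover the sequence m ↦ T₂(1,m) − T₂(0,m) is decreasing in m. -/

import Mathlib

/-- `T₂(1,m) ≥ T₂(0,m)` holds for every `m ≥ 0` if and only if `μ₁ ≥ μ₂`; moreover the
sequence `m ↦ T₂(1,m) − T₂(0,m)` is decreasing in `m`. -/
theorem stmt_7 (μ₁ μ₂ : ℝ) (hμ₁ : 0 < μ₁) (hμ₂ : 0 < μ₂)
    (T : ℕ × ℕ → ℝ)
    (hT0 : ∀ m : ℕ, T (0, m) = m / μ₂)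
    (hTb : ∀ n : ℕ, T (n + 1, 0) = 1 / μ₁ + T (n, 1))
    (hTrec : ∀ n m : ℕ, T (n + 1, m + 1) =
      1 / (μ₁ + μ₂) + μ₁ / (μ₁ + μ₂) * T (n, m + 2) + μ₂ / (μ₁ + μ₂) * T (n + 1, m))
    (T₂ : ℕ → ℕ → ℝ)
    (hT₂ : ∀ n m : ℕ, T₂ n m = T (n, m) - n / μ₁) :
    ((∀ m : ℕ, T₂ 1 m ≥ T₂ 0 m) ↔ μ₁ ≥ μ₂) ∧
    StrictAnti (fun m : ℕ => T₂ 1 m - T₂ 0 m) := by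
  have hs : 0 < μ₁ + μ₂ := by linarith
  set b : ℝ := μ₂ / (μ₁ + μ₂) with hb
  have hb0 : 0 < b := by positivity
  have hb1 : b < 1 := by
    rw [hb, div_lt_one hs]; linarith
  -- closed form for T (1, m)
  have hT1 : ∀ m : ℕ, T (1, m) = 1 / μ₁ + (m : ℝ) / μ₂ +
      (μ₁ - μ₂) / (μ₁ * μ₂) + (1 / μ₁) * b ^ m := by
    intro m
    induction m with
    | zero =>
      rw [hTb 0, hT0 1]
      field_simp
      ring
    | succ m ih =>
      rw [hTrec 0 m, hT0 (m + 2), ih]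
      have h1 : (μ₁ + μ₂) ≠ 0 := ne_of_gt hs
      rw [hb]
      push_cast
      field_simp
      have h2 : (μ₁ + μ₂) * (μ₁ + μ₂)⁻¹ = 1 := mul_inv_cancel₀ h1
      linear_combination (-(μ₂ ^ 2 * μ₂ ^ m * (μ₁ + μ₂)⁻¹ ^ m)) * h2
  have hf : ∀ m : ℕ, T₂ 1 m - T₂ 0 m =
      (μ₁ - μ₂) / (μ₁ * μ₂) + (1 / μ₁) * b ^ m := by
    intro m
    rw [hT₂ 1 m, hT₂ 0 m, hT0 m, hT1 m]
    push_cast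
    ring
  constructor
  · constructor
    · intro h
      by_contra hlt
      push_neg at hlt
      -- μ₁ < μ₂ : find m with (1/μ₁) * b ^ m < (μ₂ - μ₁)/(μ₁ * μ₂)
      have hε : 0 < (μ₂ - μ₁) / (μ₁ * μ₂) * μ₁ := by
        have : 0 < μ₂ - μ₁ := by linarith
        positivity
      obtain ⟨m, hm⟩ := exists_pow_lt_of_lt_one hε hb1
      have := h m
      have hfm := hf m
      have : (0 : ℝ) ≤ T₂ 1 m - T₂ 0 m := by linarith [h m]
      rw [hfm] at this
      have hbm : b ^ m / μ₁ < (μ₂ - μ₁) / (μ₁ * μ₂) := by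
        rw [div_lt_iff₀ hμ₁]
        exact hm
      have hone : (1 : ℝ) / μ₁ * b ^ m = b ^ m / μ₁ := by ring
      rw [hone] at this
      have hneg : (μ₁ - μ₂) / (μ₁ * μ₂) = -((μ₂ - μ₁) / (μ₁ * μ₂)) := by ring
      linarith
    · intro h m
      have hfm := hf m
      have h1 : 0 ≤ (μ₁ - μ₂) / (μ₁ * μ₂) := by
        apply div_nonneg (by linarith) (by positivity)
      have h2 : 0 < (1 / μ₁) * b ^ m := by positivity
      linarith
  · intro i j hij
    simp only
    rw [hf i, hf j]
    have : b ^ j < b ^ i := pow_lt_pow_right_of_lt_one₀ hb0 hb1 hij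
    have h1 : (1 / μ₁) * b ^ j < (1 / μ₁) * b ^ i := by
      apply mul_lt_mul_of_pos_left this (by positivity)
    linarith
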